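/- Let X=(X1,X2) be an absolutely continuous nonnegative bivariate random vector with finite ε̄*₁(X;t1,t2) and bivariate EIT component m₁^X. Then ε̄*₁(X;t1,t2) = ∫₀^{t1} m₁^X(x1,t2) f₁(x1; t1,t2) dx1, where f₁(x1;t1,t2) = (∂F(x1,t2)/∂x1)/F(t1,t2) is the density of (X1 | X1<t1, X2<t2). -/

import Mathlib

open MeasureTheory Real Set intervalIntegral


set_option maxHeartbeats 1000000 in
lemma log_FTC_aux (t1 : ℝ) (g φ : ℝ → ℝ)
    (hg : IntervalIntegrable g volume 0 t1)
    (hgnn : ∀ x, 0 ≤ g x)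
    (hdiff : ∀ a b : ℝ, 0 ≤ a → a ≤ b → b ≤ t1 → φ b - φ a = ∫ x in a..b, g x)
    (hφcont : ContinuousOn φ (Icc 0 t1))
    {u : ℝ} (hu : 0 < u) (hut : u ≤ t1) (hφu : 0 < φ u) :
    ∫ x in u..t1, g x / φ x = Real.log (φ t1) - Real.log (φ u) := by
  have hmono : ∀ a b : ℝ, 0 ≤ a → a ≤ b → b ≤ t1 → φ a ≤ φ b := by
    intro a b ha hab hbt
    have h := hdiff a b ha hab hbt
    have h2 : 0 ≤ ∫ x in a..b, g x :=
      intervalIntegral.integral_nonneg hab (fun x _ => hgnn x)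
    linarith
  have hφpos : ∀ x ∈ Icc u t1, 0 < φ x := fun x hx =>
    lt_of_lt_of_le hφu (hmono u x hu.le hx.1 hx.2)
  have hsub : ∀ a b : ℝ, u ≤ a → a ≤ b → b ≤ t1 → IntervalIntegrable g volume a b := by
    intro a b hua hab hbt
    refine hg.mono_set ?_
    rw [uIcc_of_le hab, uIcc_of_le (hu.le.trans hut)]
    exact Icc_subset_Icc (hu.le.trans hua) hbt
  have hint : ∀ a b : ℝ, u ≤ a → a ≤ b → b ≤ t1 →
      IntervalIntegrable (fun x => g x / φ x) volume a b := by
    intro a b hua hab hbt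
    have hga := hsub a b hua hab hbt
    have hinv : ContinuousOn (fun x => (φ x)⁻¹) (uIcc a b) := by
      rw [uIcc_of_le hab]
      refine ContinuousOn.inv₀ (hφcont.mono (Icc_subset_Icc (hu.le.trans hua) hbt)) ?_
      exact fun x hx => (hφpos x ⟨hua.trans hx.1, hx.2.trans hbt⟩).ne'
    simpa [div_eq_mul_inv] using hga.mul_continuousOn hinv
  have est : ∀ a b : ℝ, u ≤ a → a ≤ b → b ≤ t1 →
      |(∫ x in a..b, g x / φ x) - (Real.log (φ b) - Real.log (φ a))|
        ≤ (φ b - φ a)^2 / (φ u)^2 := by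
    intro a b hua hab hbt
    have hpa : 0 < φ a := hφpos a ⟨hua, hab.trans hbt⟩
    have hpb : 0 < φ b := hφpos b ⟨hua.trans hab, hbt⟩
    have hpab : φ a ≤ φ b := hmono a b (hu.le.trans hua) hab hbt
    have hua' : φ u ≤ φ a := hmono u a hu.le hua (hab.trans hbt)
    have hub' : φ u ≤ φ b := hmono u b hu.le (hua.trans hab) hbt
    have hd := hdiff a b (hu.le.trans hua) hab hbt
    have hga := hsub a b hua hab hbt
    have hup : (∫ x in a..b, g x / φ x) ≤ (φ b - φ a) / φ a := by
      have h1 : (∫ x in a..b, g x / φ x) ≤ ∫ x in a..b, g x / φ a := by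
        refine intervalIntegral.integral_mono_on hab (hint a b hua hab hbt)
          (hga.div_const _) (fun x hx => ?_)
        exact div_le_div_of_nonneg_left (hgnn x) hpa
          (hmono a x (hu.le.trans hua) hx.1 (hx.2.trans hbt))
      rwa [intervalIntegral.integral_div, ← hd] at h1
    have hlow : (φ b - φ a) / φ b ≤ ∫ x in a..b, g x / φ x := by
      have h1 : (∫ x in a..b, g x / φ b) ≤ ∫ x in a..b, g x / φ x := by
        refine intervalIntegral.integral_mono_on hab (hga.div_const _)
          (hint a b hua hab hbt) (fun x hx => ?_)
        exact div_le_div_of_nonneg_left (hgnn x)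
          (hφpos x ⟨hua.trans hx.1, hx.2.trans hbt⟩)
          (hmono x b (hu.le.trans (hua.trans hx.1)) hx.2 hbt)
      rwa [intervalIntegral.integral_div, ← hd] at h1
    have l1 : Real.log (φ b) - Real.log (φ a) ≤ (φ b - φ a) / φ a := by
      have h1 := Real.log_le_sub_one_of_pos (div_pos hpb hpa)
      rw [Real.log_div hpb.ne' hpa.ne'] at h1
      have h2 : φ b / φ a - 1 = (φ b - φ a) / φ a := by field_simp
      linarith
    have l2 : (φ b - φ a) / φ b ≤ Real.log (φ b) - Real.log (φ a) := by
      have h1 := Real.log_le_sub_one_of_pos (div_pos hpa hpb)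
      rw [Real.log_div hpa.ne' hpb.ne'] at h1
      have h2 : φ a / φ b - 1 = -((φ b - φ a) / φ b) := by field_simp; ring
      linarith
    have habs : |(∫ x in a..b, g x / φ x) - (Real.log (φ b) - Real.log (φ a))|
        ≤ (φ b - φ a) / φ a - (φ b - φ a) / φ b :=
      abs_le.mpr ⟨by linarith, by linarith⟩
    have e : (φ b - φ a) / φ a - (φ b - φ a) / φ b = (φ b - φ a)^2 / (φ a * φ b) := by
      field_simp
    have efin : (φ b - φ a)^2 / (φ a * φ b) ≤ (φ b - φ a)^2 / (φ u)^2 := by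
      refine div_le_div_of_nonneg_left (sq_nonneg _) (by positivity) ?_
      nlinarith
    calc |(∫ x in a..b, g x / φ x) - (Real.log (φ b) - Real.log (φ a))|
        ≤ (φ b - φ a) / φ a - (φ b - φ a) / φ b := habs
      _ = (φ b - φ a)^2 / (φ a * φ b) := e
      _ ≤ (φ b - φ a)^2 / (φ u)^2 := efin
  -- the epsilon argument
  set I := ∫ x in u..t1, g x / φ x with hI
  set L := Real.log (φ t1) - Real.log (φ u) with hL
  have main : ∀ ε > (0:ℝ), |I - L| ≤ ε := by
    intro ε hε
    set C : ℝ := (φ t1 - φ u) / (φ u)^2 + 1 with hC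
    have hC0 : 0 < C := by
      rw [hC]
      have hmt := hmono u t1 hu.le hut le_rfl
      have : 0 ≤ (φ t1 - φ u) / (φ u)^2 := div_nonneg (by linarith) (sq_nonneg _)
      linarith
    set ε' : ℝ := ε / C with hε'
    have hε'0 : 0 < ε' := div_pos hε hC0
    have unif := (isCompact_Icc.uniformContinuousOn_of_continuous hφcont)
    rw [Metric.uniformContinuousOn_iff] at unif
    obtain ⟨δ, hδ, hδ'⟩ := unif ε' hε'0
    obtain ⟨n, hn⟩ := exists_nat_gt ((t1 - u) / δ)
    have htu : 0 ≤ t1 - u := by linarith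
    have hn0 : 0 < (n:ℝ) := lt_of_le_of_lt (by positivity) hn
    have hn0' : (n:ℝ) ≠ 0 := hn0.ne'
    set p : ℕ → ℝ := fun i => u + i * ((t1 - u) / n) with hp
    have hp0 : p 0 = u := by simp [hp]
    have hpn : p n = t1 := by
      simp only [hp]
      have : (n:ℝ) * ((t1 - u) / n) = t1 - u := by field_simp
      linarith
    have hpmono : ∀ i : ℕ, p i ≤ p (i+1) := by
      intro i
      simp only [hp]
      have : (i:ℝ) ≤ (i:ℝ) + 1 := by linarith
      push_cast
      nlinarith [div_nonneg htu hn0.le]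
    have hmem : ∀ i : ℕ, i ≤ n → p i ∈ Icc u t1 := by
      intro i hi
      have hi' : (i:ℝ) ≤ n := by exact_mod_cast hi
      constructor
      · simp only [hp]; nlinarith [div_nonneg htu hn0.le]
      · simp only [hp]
        have h1 : (i:ℝ) * ((t1 - u)/n) ≤ (n:ℝ) * ((t1 - u)/n) := by
          nlinarith [div_nonneg htu hn0.le]
        have h2 : (n:ℝ) * ((t1 - u)/n) = t1 - u := by field_simp
        linarith
    have hstep : ∀ i : ℕ, p (i+1) - p i = (t1 - u)/n := by
      intro i; simp only [hp]; push_cast; ring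
    have hstepδ : (t1 - u)/n < δ := by
      rw [div_lt_iff₀ hn0]
      rw [div_lt_iff₀ hδ] at hn
      linarith [hn]
    have hΔ : ∀ i : ℕ, i < n → φ (p (i+1)) - φ (p i) ≤ ε' ∧ 0 ≤ φ (p (i+1)) - φ (p i) := by
      intro i hi
      have hi1 : i + 1 ≤ n := hi
      have hmi := hmem i hi.le
      have hmi1 := hmem (i+1) hi1
      have hIcc : Icc u t1 ⊆ Icc 0 t1 := Icc_subset_Icc hu.le le_rfl
      have hdist : dist (p (i+1)) (p i) < δ := by
        rw [Real.dist_eq, hstep i, abs_of_nonneg (div_nonneg htu hn0.le)]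
        exact hstepδ
      have := hδ' (p (i+1)) (hIcc hmi1) (p i) (hIcc hmi) hdist
      rw [Real.dist_eq] at this
      have hnn : 0 ≤ φ (p (i+1)) - φ (p i) := by
        have := hmono (p i) (p (i+1)) (hu.le.trans hmi.1) (hpmono i) hmi1.2
        linarith
      rw [abs_of_nonneg hnn] at this
      exact ⟨this.le, hnn⟩
    have hsum1 : ∑ i ∈ Finset.range n, ∫ x in p i..p (i+1), g x / φ x = I := by
      rw [hI, ← hp0, ← hpn]
      exact intervalIntegral.sum_integral_adjacent_intervals
        (fun k hk => hint _ _ (hmem k hk.le).1 (hpmono k) (hmem (k+1) hk).2)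
    have hsum2 : ∑ i ∈ Finset.range n, (Real.log (φ (p (i+1))) - Real.log (φ (p i))) = L := by
      rw [Finset.sum_range_sub (fun i => Real.log (φ (p i))), hp0, hpn]
    have hsum3 : ∑ i ∈ Finset.range n, (φ (p (i+1)) - φ (p i)) = φ t1 - φ u := by
      rw [Finset.sum_range_sub (fun i => φ (p i)), hp0, hpn]
    have key : |I - L| ≤ ε' * ((φ t1 - φ u) / (φ u)^2) := by
      rw [← hsum1, ← hsum2, ← Finset.sum_sub_distrib]
      calc |∑ i ∈ Finset.range n, ((∫ x in p i..p (i+1), g x / φ x)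
              - (Real.log (φ (p (i+1))) - Real.log (φ (p i))))|
          ≤ ∑ i ∈ Finset.range n, |(∫ x in p i..p (i+1), g x / φ x)
              - (Real.log (φ (p (i+1))) - Real.log (φ (p i)))| :=
            Finset.abs_sum_le_sum_abs _ _
        _ ≤ ∑ i ∈ Finset.range n, ε' * (φ (p (i+1)) - φ (p i)) / (φ u)^2 := by
            refine Finset.sum_le_sum (fun i hi => ?_)
            rw [Finset.mem_range] at hi
            have h1 := est (p i) (p (i+1)) (hmem i hi.le).1 (hpmono i) (hmem (i+1) hi).2
            have h2 := hΔ i hi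
            refine h1.trans ?_
            have : (φ (p (i+1)) - φ (p i))^2 ≤ ε' * (φ (p (i+1)) - φ (p i)) := by
              nlinarith [h2.1, h2.2]
            exact (div_le_div_iff_of_pos_right (by positivity)).mpr this
        _ = ε' * ((φ t1 - φ u) / (φ u)^2) := by
            rw [← Finset.sum_div, ← Finset.mul_sum, hsum3, mul_div_assoc]
    refine key.trans ?_
    have h1 : (φ t1 - φ u) / (φ u)^2 ≤ C := by rw [hC]; linarith
    calc ε' * ((φ t1 - φ u) / (φ u)^2) ≤ ε' * C := by
          refine mul_le_mul_of_nonneg_left h1 hε'0.le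
      _ = ε := by rw [hε']; field_simp
  have : |I - L| ≤ 0 := by
    refine le_of_forall_pos_le_add (fun ε hε => ?_)
    simpa using main ε hε
  have := abs_nonneg (I - L)
  have h0 : |I - L| = 0 := le_antisymm ‹|I - L| ≤ 0› this
  have := abs_eq_zero.mp h0
  linarith [this]

set_option maxHeartbeats 1000000 in
lemma fubini_aux (t1 : ℝ) (g φ : ℝ → ℝ)
    (hg : IntegrableOn g (Ioc 0 t1))
    (hgnn : ∀ x, 0 ≤ g x)
    (hφ : IntegrableOn φ (Ioc 0 t1))
    (hφcont : ContinuousOn φ (Icc 0 t1))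
    (hφmono : ∀ a b : ℝ, 0 ≤ a → a ≤ b → b ≤ t1 → φ a ≤ φ b)
    (hpos : ∀ x ∈ Ioc (0:ℝ) t1, 0 < φ x) :
    ∫ x in Ioc (0:ℝ) t1, φ x * (∫ s in Ioc x t1, g s / φ s)
      = ∫ s in Ioc (0:ℝ) t1, (∫ x in Ioc 0 s, φ x) * (g s / φ s) := by
  set μ : Measure ℝ := volume.restrict (Ioc (0:ℝ) t1) with hμ
  haveI : IsFiniteMeasure μ := ⟨by
    rw [hμ, Measure.restrict_apply_univ]; exact measure_Ioc_lt_top⟩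
  set ρ : ℝ × ℝ → ℝ :=
    {p : ℝ × ℝ | p.1 < p.2}.indicator (fun p => φ p.1 * (g p.2 / φ p.2)) with hρ
  have hφm : AEStronglyMeasurable φ μ := hφ.aestronglyMeasurable
  have hgm : AEStronglyMeasurable g μ := hg.aestronglyMeasurable
  have hψm : AEStronglyMeasurable (fun s => g s / φ s) μ := by
    have hinv : AEStronglyMeasurable (fun s => (φ s)⁻¹) μ := by
      have hc : ContinuousOn (fun s => (φ s)⁻¹) (Ioc 0 t1) :=
        ContinuousOn.inv₀ (hφcont.mono Ioc_subset_Icc_self) (fun x hx => (hpos x hx).ne')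
      exact hc.aestronglyMeasurable measurableSet_Ioc
    simpa [div_eq_mul_inv, Pi.mul_def] using hgm.mul hinv
  have hltm : MeasurableSet {p : ℝ × ℝ | p.1 < p.2} :=
    measurableSet_lt measurable_fst measurable_snd
  have hρm : AEStronglyMeasurable ρ (μ.prod μ) := by
    have h1 : AEStronglyMeasurable (fun p : ℝ × ℝ => φ p.1) (μ.prod μ) := hφm.comp_fst
    have h2 : AEStronglyMeasurable (fun p : ℝ × ℝ => g p.2 / φ p.2) (μ.prod μ) := hψm.comp_snd
    exact (h1.mul h2).indicator hltm
  have hgsnd : Integrable (fun p : ℝ × ℝ => g p.2) (μ.prod μ) := by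
    rw [integrable_prod_iff hgm.comp_snd]
    refine ⟨Filter.Eventually.of_forall (fun x => hg), ?_⟩
    exact (integrable_const (∫ y, ‖g y‖ ∂μ) : Integrable _ μ)
  have hbound : ∀ᵐ p ∂(μ.prod μ), ‖ρ p‖ ≤ g p.2 := by
    have hsq : μ.prod μ = (volume.prod volume).restrict ((Ioc (0:ℝ) t1) ×ˢ (Ioc (0:ℝ) t1)) := by
      rw [hμ, Measure.prod_restrict]
    rw [hsq]
    filter_upwards [ae_restrict_mem (measurableSet_Ioc.prod measurableSet_Ioc)] with p hp
    obtain ⟨hp1, hp2⟩ := hp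
    by_cases hlt : p.1 < p.2
    · have h1 : ρ p = φ p.1 * (g p.2 / φ p.2) := by
        rw [hρ]
        exact Set.indicator_of_mem (show p ∈ {q : ℝ × ℝ | q.1 < q.2} from hlt)
          (fun q => φ q.1 * (g q.2 / φ q.2))
      have hφ1 : 0 < φ p.1 := hpos _ hp1
      have hφ2 : 0 < φ p.2 := hpos _ hp2
      have hmono12 : φ p.1 ≤ φ p.2 := hφmono _ _ hp1.1.le hlt.le hp2.2
      rw [h1, Real.norm_eq_abs,
        abs_of_nonneg (mul_nonneg hφ1.le (div_nonneg (hgnn _) hφ2.le))]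
      calc φ p.1 * (g p.2 / φ p.2) ≤ φ p.2 * (g p.2 / φ p.2) := by
            have : 0 ≤ g p.2 / φ p.2 := div_nonneg (hgnn _) hφ2.le
            nlinarith
        _ = g p.2 := by field_simp
    · have h1 : ρ p = 0 := by
        rw [hρ]
        exact Set.indicator_of_notMem (show p ∉ {q : ℝ × ℝ | q.1 < q.2} from hlt)
          (fun q => φ q.1 * (g q.2 / φ q.2))
      rw [h1]; simpa using hgnn p.2
  have hρint : Integrable ρ (μ.prod μ) := Integrable.mono' hgsnd hρm hbound
  have hswap := MeasureTheory.integral_integral_swap (f := fun x s => ρ (x, s))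
    (μ := μ) (ν := μ) hρint
  have hleft : (∫ x, ∫ s, ρ (x, s) ∂μ ∂μ)
      = ∫ x in Ioc (0:ℝ) t1, φ x * (∫ s in Ioc x t1, g s / φ s) := by
    rw [hμ]
    refine integral_congr_ae ?_
    filter_upwards [ae_restrict_mem measurableSet_Ioc] with x hx
    have hfun : (fun s => ρ (x, s)) = (Ioi x).indicator (fun s => φ x * (g s / φ s)) := by
      funext s
      simp only [hρ, Set.indicator_apply, Set.mem_setOf_eq, Set.mem_Ioi]
    rw [hfun, MeasureTheory.integral_indicator measurableSet_Ioi,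
      Measure.restrict_restrict measurableSet_Ioi]
    have hset : Ioi x ∩ Ioc 0 t1 = Ioc x t1 := by
      ext y
      simp only [mem_inter_iff, mem_Ioi, mem_Ioc]
      constructor
      · rintro ⟨h1, _, h3⟩; exact ⟨h1, h3⟩
      · rintro ⟨h1, h2⟩; exact ⟨h1, lt_trans hx.1 h1, h2⟩
    rw [hset, MeasureTheory.integral_const_mul]
  have hright : (∫ s, ∫ x, ρ (x, s) ∂μ ∂μ)
      = ∫ s in Ioc (0:ℝ) t1, (∫ x in Ioc 0 s, φ x) * (g s / φ s) := by
    rw [hμ]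
    refine integral_congr_ae ?_
    filter_upwards [ae_restrict_mem measurableSet_Ioc] with s hs
    have hfun : (fun x => ρ (x, s)) = (Iio s).indicator (fun x => φ x * (g s / φ s)) := by
      funext x
      simp only [hρ, Set.indicator_apply, Set.mem_setOf_eq, Set.mem_Iio]
    rw [hfun, MeasureTheory.integral_indicator measurableSet_Iio,
      Measure.restrict_restrict measurableSet_Iio]
    have hset : Iio s ∩ Ioc 0 t1 = Ioo 0 s := by
      ext y
      simp only [mem_inter_iff, mem_Iio, mem_Ioc, mem_Ioo]
      constructor
      · rintro ⟨h1, h2, _⟩; exact ⟨h2, h1⟩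
      · rintro ⟨h1, h2⟩; exact ⟨h2, h1, (h2.le.trans hs.2)⟩
    rw [hset, MeasureTheory.integral_mul_const, ← MeasureTheory.integral_Ioc_eq_integral_Ioo]
  rw [← hleft, hswap, hright]

set_option maxHeartbeats 1000000 in
/-- The conditional dynamic CPE is the conditional expectation of
the bivariate expected inactivity time:
`ε̄*₁(X;t1,t2) = ∫₀^{t1} m₁^X(x1,t2) f₁(x1;t1,t2) dx1`, where
`f₁(x1;t1,t2) = f(x1,t2)/F(t1,t2)` is the density of `(X1 | X1<t1, X2<t2)` and
`m₁^X(x1,t2) = (1/F(x1,t2)) ∫₀^{x1} F(u,t2) du`. -/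
theorem CDCPE_as_expected_EIT
    (t1 t2 : ℝ) (ht1 : 0 < t1) (ht2 : 0 < t2)
    (F f : ℝ → ℝ → ℝ)
    (hFt : 0 < F t1 t2)
    (hFpos : ∀ x ∈ Set.Ioc (0:ℝ) t1, 0 < F x t2)
    -- `f(·,t2)` is the partial density of `F(·,t2)`:
    (hF : ∀ x1, F x1 t2 = ∫ u in (0:ℝ)..x1, f u t2)
    (hfnonneg : ∀ u, 0 ≤ f u t2)
    (hif : IntervalIntegrable (fun u => f u t2) volume 0 t1)
    (hiF : IntervalIntegrable (fun x => F x t2) volume 0 t1)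
    (hi' : IntervalIntegrable (fun x => F x t2 * Real.log (F x t2)) volume 0 t1) :
    (-∫ x1 in (0:ℝ)..t1,
        (F x1 t2 / F t1 t2) * Real.log (F x1 t2 / F t1 t2)) =
      ∫ x1 in (0:ℝ)..t1,
        ((∫ u in (0:ℝ)..x1, F u t2) / F x1 t2) * (f x1 t2 / F t1 t2) := by
  have hbase : ∀ a b : ℝ, 0 ≤ a → a ≤ b → b ≤ t1 →
      IntervalIntegrable (fun u => f u t2) volume a b := by
    intro a b ha hab hbt
    refine hif.mono_set ?_
    rw [uIcc_of_le hab, uIcc_of_le ht1.le]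
    exact Icc_subset_Icc ha hbt
  have hdiff : ∀ a b : ℝ, 0 ≤ a → a ≤ b → b ≤ t1 →
      F b t2 - F a t2 = ∫ x in a..b, f x t2 := by
    intro a b ha hab hbt
    rw [hF a, hF b,
      ← intervalIntegral.integral_add_adjacent_intervals
        (hbase 0 a le_rfl ha (hab.trans hbt)) (hbase a b ha hab hbt)]
    ring
  have hmono : ∀ a b : ℝ, 0 ≤ a → a ≤ b → b ≤ t1 → F a t2 ≤ F b t2 := by
    intro a b ha hab hbt
    have h1 := hdiff a b ha hab hbt
    have h2 : 0 ≤ ∫ x in a..b, f x t2 :=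
      intervalIntegral.integral_nonneg hab (fun x _ => hfnonneg x)
    linarith
  have hIccInt : IntegrableOn (fun u => f u t2) (uIcc 0 t1) volume := by
    rw [uIcc_of_le ht1.le]
    exact (intervalIntegrable_iff_integrableOn_Icc_of_le ht1.le).mp hif
  have hcont : ContinuousOn (fun x => F x t2) (Icc 0 t1) := by
    have h1 := intervalIntegral.continuousOn_primitive_interval (a := 0) (b := t1)
      (μ := volume) hIccInt
    rw [uIcc_of_le ht1.le] at h1
    exact h1.congr (fun x _ => hF x)
  have hF0 : F 0 t2 = 0 := by rw [hF 0]; simp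
  have hkey : ∀ x ∈ Ioc (0:ℝ) t1,
      ∫ s in x..t1, f s t2 / F s t2 = Real.log (F t1 t2) - Real.log (F x t2) :=
    fun x hx => log_FTC_aux t1 (fun u => f u t2) (fun x => F x t2) hif hfnonneg
      hdiff hcont hx.1 hx.2 (hFpos x hx)
  have hcong1 : (∫ x1 in (0:ℝ)..t1,
        -((F x1 t2 / F t1 t2) * Real.log (F x1 t2 / F t1 t2)))
      = ∫ x1 in (0:ℝ)..t1,
        (1 / F t1 t2) * (F x1 t2 * (∫ s in x1..t1, f s t2 / F s t2)) := by
    refine intervalIntegral.integral_congr (fun x hx => ?_)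
    rw [uIcc_of_le ht1.le] at hx
    by_cases hx0 : x = 0
    · subst hx0; rw [hF0]; simp
    · have hxI : x ∈ Ioc (0:ℝ) t1 := ⟨lt_of_le_of_ne hx.1 (Ne.symm hx0), hx.2⟩
      have hp := hFpos x hxI
      rw [hkey x hxI, Real.log_div hp.ne' hFt.ne']
      ring
  have hcong2 : (∫ x1 in (0:ℝ)..t1,
        ((∫ u in (0:ℝ)..x1, F u t2) / F x1 t2) * (f x1 t2 / F t1 t2))
      = ∫ x1 in (0:ℝ)..t1,
        (1 / F t1 t2) * ((∫ u in (0:ℝ)..x1, F u t2) * (f x1 t2 / F x1 t2)) := by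
    refine intervalIntegral.integral_congr (fun x hx => ?_)
    ring
  rw [← intervalIntegral.integral_neg, hcong1, hcong2,
    intervalIntegral.integral_const_mul, intervalIntegral.integral_const_mul]
  congr 1
  rw [intervalIntegral.integral_of_le ht1.le, intervalIntegral.integral_of_le ht1.le]
  have hmain := fubini_aux t1 (fun u => f u t2) (fun x => F x t2) hif.1 hfnonneg
    hiF.1 hcont hmono hFpos
  calc ∫ x1 in Ioc (0:ℝ) t1, F x1 t2 * (∫ s in x1..t1, f s t2 / F s t2)
      = ∫ x1 in Ioc (0:ℝ) t1, F x1 t2 * (∫ s in Ioc x1 t1, f s t2 / F s t2) := by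
        refine setIntegral_congr_fun measurableSet_Ioc (fun x hx => ?_)
        rw [intervalIntegral.integral_of_le hx.2]
    _ = ∫ s in Ioc (0:ℝ) t1, (∫ x in Ioc 0 s, F x t2) * (f s t2 / F s t2) := hmain
    _ = ∫ x1 in Ioc (0:ℝ) t1, (∫ u in (0:ℝ)..x1, F u t2) * (f x1 t2 / F x1 t2) := by
        refine setIntegral_congr_fun measurableSet_Ioc (fun x hx => ?_)
        rw [intervalIntegral.integral_of_le hx.1.le]
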